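/- Let u, v ∈ U⁻_{>0} ⊂ GL₃(ℝ) with u = [[1,0,0],[a,1,0],[b,c,1]], v = [[1,0,0],[a',1,0],[b',c',1]] (a,b,c,ac−b,a',b',c',a'c'−b' > 0). Then z = u⁻¹v⁻¹ = [[1,0,0],[−a−a',1,0],[A,−c−c',1]] where A = ac+a'c+a'c'−b−b', and z satisfies: its (2,1) and (3,2) entries are negative while A > 0 and (−a−a')(−c−c') − A = C' for some C' > 0; i.e., z ∈ U⁻_{<0}. -/
import Mathlib

open Matrix

theorem stmt18 (a b c a' b' c' : ℝ) (ha : 0 < a) (hb : 0 < b) (hc : 0 < c)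
    (ha' : 0 < a') (hb' : 0 < b') (hc' : 0 < c')
    (h1 : 0 < a * c - b) (h2 : 0 < a' * c' - b')
    (A : ℝ) (hA : A = a * c + a' * c + a' * c' - b - b') :
    (!![1, 0, 0; a, 1, 0; b, c, 1] : Matrix (Fin 3) (Fin 3) ℝ)⁻¹ *
      (!![1, 0, 0; a', 1, 0; b', c', 1] : Matrix (Fin 3) (Fin 3) ℝ)⁻¹ =
      !![1, 0, 0; -a - a', 1, 0; A, -c - c', 1] ∧
    (-a - a' < 0 ∧ -c - c' < 0 ∧ 0 < A ∧
      ∃ C' : ℝ, 0 < C' ∧ (-a - a') * (-c - c') - A = C') := by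
  have hu : (!![1, 0, 0; a, 1, 0; b, c, 1] : Matrix (Fin 3) (Fin 3) ℝ)⁻¹ =
      !![1, 0, 0; -a, 1, 0; a*c - b, -c, 1] := by
    apply inv_eq_right_inv
    ext i j
    fin_cases i <;> fin_cases j <;>
      simp [Matrix.mul_apply, Fin.sum_univ_three, Matrix.one_apply] <;> ring
  have hv : (!![1, 0, 0; a', 1, 0; b', c', 1] : Matrix (Fin 3) (Fin 3) ℝ)⁻¹ =
      !![1, 0, 0; -a', 1, 0; a'*c' - b', -c', 1] := by
    apply inv_eq_right_inv
    ext i j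
    fin_cases i <;> fin_cases j <;>
      simp [Matrix.mul_apply, Fin.sum_univ_three, Matrix.one_apply] <;> ring
  refine ⟨?_, by linarith, by linarith, by nlinarith, a*c' + b + b', by positivity, by ring_nf; linarith⟩
  rw [hu, hv, hA]
  ext i j
  fin_cases i <;> fin_cases j <;>
    simp [Matrix.mul_apply, Fin.sum_univ_three] <;> ring
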